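/- A bipartite graph with preferences has a unique stable matching if and only if the active graph Γ(M₀) of the I-optimal stable matching M₀ is a forest (contains no cycle). -/

import Mathlib

/-- A finite bipartite graph with strict preference orders.
Vertices on one side have type `I` ("men"), on the other side `J` ("women").
Edges are pairs `(m, w) : I × J`; the edge set is `E`.
`pI m e f` means vertex `m ∈ I` strictly prefers edge `e` to edge `f`
(both incident to `m`); similarly `pJ` for the `J` side.
The axioms say that each `pI m` (resp. `pJ w`) is a strict linear order
on the set `δ(m)` (resp. `δ(w)`) of edges of `E` incident to the vertex. -/
structure PrefSystem (I J : Type) where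
  E : Finset (I × J)
  pI : I → (I × J) → (I × J) → Prop
  pJ : J → (I × J) → (I × J) → Prop
  pI_irrefl : ∀ m e, ¬ pI m e e
  pI_trans : ∀ m e f g, pI m e f → pI m f g → pI m e g
  pI_total : ∀ m e f, e ∈ E → f ∈ E → e.1 = m → f.1 = m → e ≠ f → pI m e f ∨ pI m f e
  pJ_irrefl : ∀ w e, ¬ pJ w e e
  pJ_trans : ∀ w e f g, pJ w e f → pJ w f g → pJ w e g
  pJ_total : ∀ w e f, e ∈ E → f ∈ E → e.2 = w → f.2 = w → e ≠ f → pJ w e f ∨ pJ w f e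

variable {I J : Type}

/-- `M` is a matching: a set of edges of `G`, no two of which share a vertex. -/
def IsMatching (G : PrefSystem I J) (M : Finset (I × J)) : Prop :=
  M ⊆ G.E ∧ ∀ e ∈ M, ∀ f ∈ M, e ≠ f → e.1 ≠ f.1 ∧ e.2 ≠ f.2

/-- The edge `e ∈ E \ M` blocks `M` if, for each endpoint `v` of `e`,
either `v` is uncovered by `M` or `v` strictly prefers `e` to its `M`-edge. -/
def Blocks (G : PrefSystem I J) (M : Finset (I × J)) (e : I × J) : Prop :=
  e ∈ G.E ∧ e ∉ M ∧ (∀ f ∈ M, f.1 = e.1 → G.pI e.1 e f) ∧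
    (∀ f ∈ M, f.2 = e.2 → G.pJ e.2 e f)

/-- A stable matching: a matching with no blocking edge. -/
def IsStable (G : PrefSystem I J) (M : Finset (I × J)) : Prop :=
  IsMatching G M ∧ ∀ e, ¬ Blocks G M e

/-- `M ≼ L`: every covered vertex in `I` weakly prefers its `M`-edge to its `L`-edge. -/
def Preceq (G : PrefSystem I J) (M L : Finset (I × J)) : Prop :=
  ∀ e ∈ M, ∀ f ∈ L, e.1 = f.1 → e = f ∨ G.pI e.1 e f

/-- `a = mw ∉ M` is admissible for `M`: `M` has an edge at `m` preferred to `a`,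
and either `w` is uncovered by `M` or `a` is preferred by `w` to its `M`-edge. -/
def Admissible (G : PrefSystem I J) (M : Finset (I × J)) (a : I × J) : Prop :=
  a ∈ G.E ∧ a ∉ M ∧ (∃ e ∈ M, e.1 = a.1 ∧ G.pI a.1 e a) ∧
    (∀ e ∈ M, e.2 = a.2 → G.pJ a.2 a e)

/-- `a` is the active edge at the vertex `a.1 ∈ I`: the most preferred
admissible edge incident to `a.1`. -/
def ActiveEdge (G : PrefSystem I J) (M : Finset (I × J)) (a : I × J) : Prop :=
  Admissible G M a ∧ ∀ b, Admissible G M b → b.1 = a.1 → b = a ∨ G.pI a.1 a b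

/-- `e` is an edge of the active graph `Γ(M)`: a matching edge or an active edge. -/
def InGamma (G : PrefSystem I J) (M : Finset (I × J)) (e : I × J) : Prop :=
  e ∈ M ∨ ActiveEdge G M e

/-- A rotation for `M`: a (simple, alternating) cycle of the active graph `Γ(M)`,
given as a cyclic sequence `c` of `k ≥ 2` distinct edges of `Γ(M)`, consecutive
edges sharing a vertex, alternating between `M`-edges and active edges, and such
that non-consecutive edges share no vertex. -/
def IsRotation (G : PrefSystem I J) (M : Finset (I × J))
    (k : ℕ) (c : ZMod k → I × J) : Prop :=
  2 ≤ k ∧ Function.Injective c ∧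
  (∀ i, InGamma G M (c i)) ∧
  (∀ i, (c i).1 = (c (i + 1)).1 ∨ (c i).2 = (c (i + 1)).2) ∧
  (∀ i, c i ∈ M ↔ c (i + 1) ∉ M) ∧
  (∀ i j : ZMod k, i ≠ j → ((c i).1 = (c j).1 ∨ (c i).2 = (c j).2) →
    j = i + 1 ∨ i = j + 1)

/-- The active graph `Γ(M)` as a simple graph on the vertex set `I ⊕ J`. -/
def gammaSG (G : PrefSystem I J) (M : Finset (I × J)) : SimpleGraph (I ⊕ J) where
  Adj u v := match u, v with
    | Sum.inl m, Sum.inr w => InGamma G M (m, w)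
    | Sum.inr w, Sum.inl m => InGamma G M (m, w)
    | _, _ => False
  symm := ⟨by rintro (m | w) (m' | w') h <;> simp_all⟩
  loopless := ⟨by rintro (m | w) h <;> simp_all⟩


set_option linter.unusedSectionVars false

open SimpleGraph

section GenericAux

/-- A finite nonempty set totally ordered by a transitive relation has a maximum. -/
lemma finset_max_rel {α : Type*} (r : α → α → Prop)
    (htrans : ∀ a b c, r a b → r b c → r a c) :
    ∀ (s : Finset α), s.Nonempty → (∀ a ∈ s, ∀ b ∈ s, a ≠ b → r a b ∨ r b a) →
      ∃ a ∈ s, ∀ b ∈ s, b ≠ a → r a b := by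
  intro s hs
  induction hs using Finset.Nonempty.cons_induction with
  | singleton a =>
    intro _
    exact ⟨a, Finset.mem_singleton_self a, fun b hb hne =>
      absurd (Finset.mem_singleton.mp hb) hne⟩
  | cons x s hx hs ih =>
    intro htot
    obtain ⟨a, ha, hmax⟩ := ih fun a ha b hb hne =>
      htot a (Finset.mem_cons_of_mem ha) b (Finset.mem_cons_of_mem hb) hne
    have hxa : x ≠ a := fun h => hx (h ▸ ha)
    rcases htot x (Finset.mem_cons_self x s) a (Finset.mem_cons_of_mem ha) hxa with hra | hra
    · refine ⟨x, Finset.mem_cons_self x s, ?_⟩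
      intro b hb hne
      rcases Finset.mem_cons.mp hb with rfl | hb
      · exact absurd rfl hne
      · by_cases hba : b = a
        · exact hba ▸ hra
        · exact htrans _ _ _ hra (hmax b hb hba)
    · refine ⟨a, Finset.mem_cons_of_mem ha, ?_⟩
      intro b hb hne
      rcases Finset.mem_cons.mp hb with rfl | hb
      · exact hra
      · exact hmax b hb hne

/-- In a walk with no repeated vertices, every edge containing the final vertex
is the last edge. -/
lemma path_last_edge {V : Type*} {G : SimpleGraph V} :
    ∀ {w v : V} (q : G.Walk w v), q.support.Nodup → ¬ q.Nil →
      ∃ x, s(x, v) ∈ q.edges ∧ ∀ e ∈ q.edges, v ∈ e → e = s(x, v) := by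
  intro w v q
  induction q with
  | nil =>
    intro _ hnil
    exact absurd SimpleGraph.Walk.nil_nil hnil
  | @cons w y v h q ih =>
    intro hnodup _
    cases q with
    | nil =>
      refine ⟨w, by simp, ?_⟩
      intro e he _
      simpa using he
    | @cons y z v h' q' =>
      have hnodup' : (SimpleGraph.Walk.cons h' q').support.Nodup := by
        rw [SimpleGraph.Walk.support_cons] at hnodup
        exact (List.nodup_cons.mp hnodup).2
      have hwns : w ∉ (SimpleGraph.Walk.cons h' q').support := by
        rw [SimpleGraph.Walk.support_cons] at hnodup
        exact (List.nodup_cons.mp hnodup).1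
      obtain ⟨x, hx, hall⟩ := ih hnodup' SimpleGraph.Walk.not_nil_cons
      refine ⟨x, by rw [SimpleGraph.Walk.edges_cons]; exact List.mem_cons_of_mem _ hx, ?_⟩
      intro e he hve
      rw [SimpleGraph.Walk.edges_cons, List.mem_cons] at he
      rcases he with rfl | he
      · rw [Sym2.mem_iff] at hve
        rcases hve with rfl | rfl
        · exact absurd (SimpleGraph.Walk.end_mem_support _) hwns
        · -- v = y : the rest walk is a walk v → v with nodup support, hence nil
          exfalso
          have hnil := SimpleGraph.Walk.isPath_iff_eq_nil.mp
            (SimpleGraph.Walk.IsPath.mk' hnodup')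
          have h2 : (SimpleGraph.Walk.cons h' q').Nil := by
            rw [hnil]; exact SimpleGraph.Walk.nil_nil
          exact SimpleGraph.Walk.not_nil_cons h2
      · exact hall e he hve

/-- Every vertex on a cycle has exactly two incident edges among the cycle's edges. -/
lemma cycle_two_edges_start {V : Type*} {G : SimpleGraph V} {v : V} {c : G.Walk v v}
    (hc : c.IsCycle) :
    ∃ e₁ e₂ : Sym2 V, e₁ ∈ c.edges ∧ e₂ ∈ c.edges ∧ e₁ ≠ e₂ ∧ v ∈ e₁ ∧ v ∈ e₂ ∧
      ∀ e ∈ c.edges, v ∈ e → e = e₁ ∨ e = e₂ := by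
  cases c with
  | nil => exact absurd hc SimpleGraph.Walk.IsCycle.not_of_nil
  | @cons v x v h q =>
    rw [SimpleGraph.Walk.cons_isCycle_iff] at hc
    have hqnil : ¬ q.Nil := by
      intro hn
      exact G.loopless.irrefl v (hn.eq ▸ h)
    obtain ⟨x0, hx0, hall⟩ := path_last_edge q hc.1.support_nodup hqnil
    refine ⟨s(v, x), s(x0, v), by simp, by simp [hx0], ?_, by simp, by simp, ?_⟩
    · intro heq
      exact hc.2 (heq ▸ hx0)
    · intro e he hve
      rw [SimpleGraph.Walk.edges_cons, List.mem_cons] at he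
      rcases he with rfl | he
      · exact Or.inl rfl
      · exact Or.inr (hall e he hve)

lemma cycle_two_edges {V : Type*} [DecidableEq V] {G : SimpleGraph V} {u : V}
    {p : G.Walk u u} (hp : p.IsCycle) {v : V} (hv : v ∈ p.support) :
    ∃ e₁ e₂ : Sym2 V, e₁ ∈ p.edges ∧ e₂ ∈ p.edges ∧ e₁ ≠ e₂ ∧ v ∈ e₁ ∧ v ∈ e₂ ∧
      ∀ e ∈ p.edges, v ∈ e → e = e₁ ∨ e = e₂ := by
  have hmem : ∀ e : Sym2 V, e ∈ (p.rotate v hv).edges ↔ e ∈ p.edges :=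
    fun e => (p.rotate_edges v hv).mem_iff
  obtain ⟨e₁, e₂, h1, h2, hne, hv1, hv2, hcov⟩ := cycle_two_edges_start (hp.rotate hv)
  exact ⟨e₁, e₂, (hmem e₁).mp h1, (hmem e₂).mp h2, hne, hv1, hv2,
    fun e he hve => hcov e ((hmem e).mpr he) hve⟩

/-- Iterating an injective-on-`P` map that preserves `P` and never returns to `h0`. -/
lemma iterate_contradiction {α : Type*} [Finite α] (F : α → α) (P : α → Prop)
    (hP : ∀ x, P x → P (F x))
    (hinj : ∀ x y, P x → P y → F x = F y → x = y)
    (h0 : α) (hP0 : P h0) (hesc : ∀ x, P x → F x ≠ h0) : False := by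
  have hiter : ∀ n, P (F^[n] h0) := by
    intro n
    induction n with
    | zero => exact hP0
    | succ n ihn => rw [Function.iterate_succ_apply']; exact hP _ ihn
  obtain ⟨a, b, hab, heq⟩ := Finite.exists_ne_map_eq_of_infinite fun n : ℕ => F^[n] h0
  wlog hlt : a < b generalizing a b
  · exact this b a hab.symm heq.symm (by omega)
  have hpeel : ∀ j (x y : α), P x → P y → F^[j] x = F^[j] y → x = y := by
    intro j
    induction j with
    | zero => intro x y _ _ h; exact h
    | succ j ihj =>
      intro x y hx hy h
      rw [Function.iterate_succ_apply, Function.iterate_succ_apply] at h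
      exact hinj x y hx hy (ihj (F x) (F y) (hP x hx) (hP y hy) h)
  have hiterd : F^[b - a] h0 = F (F^[b - a - 1] h0) := by
    have h3 : b - a = (b - a - 1) + 1 := by omega
    conv_lhs => rw [h3]
    rw [Function.iterate_succ_apply']
  have : h0 = F^[b - a] h0 := by
    apply hpeel a h0 (F^[b-a] h0) hP0 (hiter _)
    rw [← Function.iterate_add_apply]
    have : a + (b - a) = b := by omega
    rw [this, heq]
  exact hesc (F^[b-a-1] h0) (hiter _) (by rw [← hiterd, ← this])

end GenericAux
section StableAux

variable {I J : Type} [DecidableEq I] [DecidableEq J]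

lemma uniq1 {G : PrefSystem I J} {M : Finset (I × J)} (hM : IsMatching G M)
    {e f : I × J} (he : e ∈ M) (hf : f ∈ M) (h : e.1 = f.1) : e = f := by
  by_contra hne
  exact (hM.2 e he f hf hne).1 h

lemma uniq2 {G : PrefSystem I J} {M : Finset (I × J)} (hM : IsMatching G M)
    {e f : I × J} (he : e ∈ M) (hf : f ∈ M) (h : e.2 = f.2) : e = f := by
  by_contra hne
  exact (hM.2 e he f hf hne).2 h

lemma active_unique {G : PrefSystem I J} {M : Finset (I × J)} {a b : I × J}
    (ha : ActiveEdge G M a) (hb : ActiveEdge G M b) (h : a.1 = b.1) : a = b := by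
  rcases ha.2 b hb.1 h.symm with h1 | h1
  · exact h1.symm
  rcases hb.2 a ha.1 h with h2 | h2
  · exact h2
  exfalso
  have h2' : G.pI a.1 b a := by rw [h]; exact h2
  exact G.pI_irrefl a.1 a (G.pI_trans a.1 a b a h1 h2')

lemma admissible_E {G : PrefSystem I J} {M : Finset (I × J)} {a : I × J}
    (h : Admissible G M a) : a ∈ G.E := h.1

lemma inGamma_E {G : PrefSystem I J} {M : Finset (I × J)} (hM : IsMatching G M)
    {e : I × J} (h : InGamma G M e) : e ∈ G.E := by
  rcases h with h | h
  · exact hM.1 h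
  · exact h.1.1

section WithL

variable {G : PrefSystem I J} {M₀ L : Finset (I × J)}

lemma strictPref (hpre : Preceq G M₀ L) {e f : I × J} (he : e ∈ M₀) (hf : f ∈ L)
    (h : e.1 = f.1) (hne : e ≠ f) : G.pI e.1 e f :=
  (hpre e he f hf h).resolve_left hne

lemma man_cov (h₀ : IsStable G M₀) (hL : IsStable G L) (hpre : Preceq G M₀ L)
    {f : I × J} (hf : f ∈ L) (hfM : f ∉ M₀) : ∃ e, e ∈ M₀ ∧ e.1 = f.1 := by
  by_contra hno
  push_neg at hno
  apply h₀.2 f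
  refine ⟨hL.1.1 hf, hfM, ?_, ?_⟩
  · intro g hg hg1
    exact absurd hg1 (hno g hg)
  · intro g hg hg2
    by_contra hpj
    have hgf : g ≠ f := fun h => hfM (h ▸ hg)
    have hpj2 : G.pJ f.2 g f :=
      (G.pJ_total f.2 f g (hL.1.1 hf) (h₀.1.1 hg) rfl hg2 (Ne.symm hgf)).resolve_left hpj
    apply hL.2 g
    have hgL : g ∉ L := fun hgL => hgf (uniq2 hL.1 hgL hf hg2)
    refine ⟨h₀.1.1 hg, hgL, ?_, ?_⟩
    · intro h' hh' hh1
      exact strictPref hpre hg hh' hh1.symm (fun he' => hgL (he' ▸ hh'))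
    · intro h' hh' hh2
      have hf' : h' = f := uniq2 hL.1 hh' hf (by rw [hh2, hg2])
      rw [hf', hg2]
      exact hpj2

lemma woman_cov (h₀ : IsStable G M₀) (hL : IsStable G L) (hpre : Preceq G M₀ L)
    {g : I × J} (hg : g ∈ M₀) (hgL : g ∉ L) : ∃ h', h' ∈ L ∧ h'.2 = g.2 := by
  by_contra hno
  push_neg at hno
  apply hL.2 g
  refine ⟨h₀.1.1 hg, hgL, ?_, ?_⟩
  · intro h' hh' hh1
    exact strictPref hpre hg hh' hh1.symm (fun he' => hgL (he' ▸ hh'))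
  · intro h' hh' hh2
    exact absurd hh2 (hno h' hh')

/-- Rural-hospitals-style exchange: every woman covered by `L` is covered by `M₀`,
and every man covered by `M₀` is covered by `L`. -/
lemma cov_exchange (h₀ : IsStable G M₀) (hL : IsStable G L) (hpre : Preceq G M₀ L) :
    (∀ x ∈ L, ∃ e, e ∈ M₀ ∧ e.2 = x.2) ∧ (∀ y ∈ M₀, ∃ f, f ∈ L ∧ f.1 = y.1) := by
  classical
  set A := L \ M₀ with hA
  set B := M₀ \ L with hB
  have main : (∀ x ∈ A, ∃ e, e ∈ M₀ ∧ e.2 = x.2) ∧ (∀ y ∈ B, ∃ f, f ∈ L ∧ f.1 = y.1) := by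
    by_cases hne : A.Nonempty ∨ B.Nonempty
    · have hnonempty : Nonempty (I × J) := by
        rcases hne with ⟨x, hx⟩ | ⟨x, hx⟩ <;> exact ⟨x⟩
      obtain ⟨g, hg⟩ : ∃ g : (I × J) → I × J, ∀ x ∈ A, g x ∈ M₀ ∧ (g x).1 = x.1 := by
        have : ∀ x : I × J, ∃ e, x ∈ A → (e ∈ M₀ ∧ e.1 = x.1) := by
          intro x
          by_cases hx : x ∈ A
          · obtain ⟨e, he⟩ := man_cov h₀ hL hpre (Finset.mem_sdiff.mp hx).1
              (Finset.mem_sdiff.mp hx).2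
            exact ⟨e, fun _ => he⟩
          · exact ⟨Classical.arbitrary _, fun h => absurd h hx⟩
        choose g hg using this
        exact ⟨g, fun x hx => hg x hx⟩
      obtain ⟨k, hk⟩ : ∃ k : (I × J) → I × J, ∀ y ∈ B, k y ∈ L ∧ (k y).2 = y.2 := by
        have : ∀ y : I × J, ∃ f, y ∈ B → (f ∈ L ∧ f.2 = y.2) := by
          intro y
          by_cases hy : y ∈ B
          · obtain ⟨f, hf⟩ := woman_cov h₀ hL hpre (Finset.mem_sdiff.mp hy).1
              (Finset.mem_sdiff.mp hy).2
            exact ⟨f, fun _ => hf⟩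
          · exact ⟨Classical.arbitrary _, fun h => absurd h hy⟩
        choose k hk using this
        exact ⟨k, fun y hy => hk y hy⟩
      have hgmaps : ∀ x ∈ A, g x ∈ B := by
        intro x hx
        obtain ⟨hx1, hx2⟩ := Finset.mem_sdiff.mp hx
        refine Finset.mem_sdiff.mpr ⟨(hg x hx).1, fun hgl => ?_⟩
        exact hx2 ((uniq1 hL.1 hgl hx1 (hg x hx).2) ▸ (hg x hx).1)
      have hkmaps : ∀ y ∈ B, k y ∈ A := by
        intro y hy
        obtain ⟨hy1, hy2⟩ := Finset.mem_sdiff.mp hy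
        refine Finset.mem_sdiff.mpr ⟨(hk y hy).1, fun hkm => ?_⟩
        exact hy2 ((uniq2 h₀.1 hkm hy1 (hk y hy).2) ▸ (hk y hy).1)
      have hginj : Set.InjOn g A := by
        intro x hx x' hx' heq
        have h1 : x.1 = x'.1 := by
          rw [← (hg x hx).2, ← (hg x' hx').2, heq]
        exact uniq1 hL.1 (Finset.mem_sdiff.mp hx).1 (Finset.mem_sdiff.mp hx').1 h1
      have hkinj : Set.InjOn k B := by
        intro y hy y' hy' heq
        have h2 : y.2 = y'.2 := by
          rw [← (hk y hy).2, ← (hk y' hy').2, heq]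
        exact uniq2 h₀.1 (Finset.mem_sdiff.mp hy).1 (Finset.mem_sdiff.mp hy').1 h2
      have hAB : A.card ≤ B.card := Finset.card_le_card_of_injOn g hgmaps hginj
      have hBA : B.card ≤ A.card := Finset.card_le_card_of_injOn k hkmaps hkinj
      have hkimg : B.image k = A := by
        apply Finset.eq_of_subset_of_card_le
        · intro z hz
          obtain ⟨y, hy, rfl⟩ := Finset.mem_image.mp hz
          exact hkmaps y hy
        · rw [Finset.card_image_of_injOn hkinj]
          omega
      have hgimg : A.image g = B := by
        apply Finset.eq_of_subset_of_card_le
        · intro z hz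
          obtain ⟨x, hx, rfl⟩ := Finset.mem_image.mp hz
          exact hgmaps x hx
        · rw [Finset.card_image_of_injOn hginj]
          omega
      constructor
      · intro x hx
        have : x ∈ B.image k := hkimg.symm ▸ hx
        obtain ⟨y, hy, rfl⟩ := Finset.mem_image.mp this
        exact ⟨y, (Finset.mem_sdiff.mp hy).1, ((hk y hy).2).symm⟩
      · intro y hy
        have : y ∈ A.image g := hgimg.symm ▸ hy
        obtain ⟨x, hx, rfl⟩ := Finset.mem_image.mp this
        exact ⟨x, (Finset.mem_sdiff.mp hx).1, ((hg x hx).2).symm⟩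
    · push_neg at hne
      have hA0 := hne.1
      have hB0 := hne.2
      constructor
      · intro x hx
        exact absurd (hA0 ▸ hx) (Finset.notMem_empty x)
      · intro y hy
        exact absurd (hB0 ▸ hy) (Finset.notMem_empty y)
  constructor
  · intro x hx
    by_cases hxM : x ∈ M₀
    · exact ⟨x, hxM, rfl⟩
    · exact main.1 x (Finset.mem_sdiff.mpr ⟨hx, hxM⟩)
  · intro y hy
    by_cases hyL : y ∈ L
    · exact ⟨y, hyL, rfl⟩
    · exact main.2 y (Finset.mem_sdiff.mpr ⟨hy, hyL⟩)

lemma adm_of_L (h₀ : IsStable G M₀) (hL : IsStable G L) (hpre : Preceq G M₀ L)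
    {e f : I × J} (he : e ∈ M₀) (hf : f ∈ L) (h1 : e.1 = f.1) (hne : e ≠ f) :
    Admissible G M₀ f := by
  have hfM : f ∉ M₀ := fun hfM => hne (uniq1 h₀.1 he hfM h1)
  have hpief : G.pI f.1 e f := by
    have := strictPref hpre he hf h1 hne
    rwa [h1] at this
  refine ⟨hL.1.1 hf, hfM, ⟨e, he, h1, hpief⟩, ?_⟩
  intro g hg hg2
  by_contra hpj
  have hgf : g ≠ f := fun h => hfM (h ▸ hg)
  have hpj2 : G.pJ f.2 g f :=
    (G.pJ_total f.2 f g (hL.1.1 hf) (h₀.1.1 hg) rfl hg2 (Ne.symm hgf)).resolve_left hpj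
  have hgL : g ∉ L := fun hgL => hgf (uniq2 hL.1 hgL hf hg2)
  apply hL.2 g
  refine ⟨h₀.1.1 hg, hgL, ?_, ?_⟩
  · intro h' hh' hh1
    exact strictPref hpre hg hh' hh1.symm (fun he' => hgL (he' ▸ hh'))
  · intro h' hh' hh2
    have hf' : h' = f := uniq2 hL.1 hh' hf (by rw [hh2, hg2])
    rw [hf', hg2]
    exact hpj2

end WithL

lemma active_exists {G : PrefSystem I J} {M₀ : Finset (I × J)} {f : I × J}
    (hadm : Admissible G M₀ f) : ∃ a, ActiveEdge G M₀ a ∧ a.1 = f.1 := by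
  classical
  set s := G.E.filter (fun e => Admissible G M₀ e ∧ e.1 = f.1) with hs
  have hfs : f ∈ s := Finset.mem_filter.mpr ⟨hadm.1, hadm, rfl⟩
  obtain ⟨a, ha, hmax⟩ := finset_max_rel (G.pI f.1) (G.pI_trans f.1) s ⟨f, hfs⟩ (by
    intro x hx y hy hne
    obtain hx' := Finset.mem_filter.mp hx
    obtain hy' := Finset.mem_filter.mp hy
    exact G.pI_total f.1 x y hx'.1 hy'.1 hx'.2.2 hy'.2.2 hne)
  obtain ha' := Finset.mem_filter.mp ha
  refine ⟨a, ⟨ha'.2.1, ?_⟩, ha'.2.2⟩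
  intro b hb hb1
  by_cases hba : b = a
  · exact Or.inl hba
  · right
    have hbs : b ∈ s := Finset.mem_filter.mpr ⟨hb.1, hb, by rw [hb1, ha'.2.2]⟩
    have := hmax b hbs hba
    rw [ha'.2.2]
    exact this

end StableAux
section MainAux

variable {I J : Type} [Fintype I] [Fintype J] [DecidableEq I] [DecidableEq J]
variable {G : PrefSystem I J} {M₀ : Finset (I × J)}

lemma gamma_adj {M : Finset (I × J)} {m : I} {w : J} :
    (gammaSG G M).Adj (Sum.inl m) (Sum.inr w) ↔ InGamma G M (m, w) := Iff.rfl

lemma pair_eq {a c : I} {b d : J} :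
    s(Sum.inl a, (Sum.inr b : I ⊕ J)) = s(Sum.inl c, (Sum.inr d : I ⊕ J)) ↔ a = c ∧ b = d := by
  rw [Sym2.eq_iff]
  constructor
  · rintro (⟨h1, h2⟩ | ⟨h1, h2⟩)
    · exact ⟨Sum.inl.inj h1, Sum.inr.inj h2⟩
    · simp at h1
  · rintro ⟨rfl, rfl⟩
    exact Or.inl ⟨rfl, rfl⟩

lemma step_lemma {L : Finset (I × J)} (h₀ : IsStable G M₀) (hL : IsStable G L)
    (hpre : Preceq G M₀ L) {m : I}
    (hm : ∃ e f : I × J, e ∈ M₀ ∧ f ∈ L ∧ e.1 = m ∧ f.1 = m ∧ e ≠ f) :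
    ∃ a e' : I × J, ActiveEdge G M₀ a ∧ a.1 = m ∧ a ∉ M₀ ∧ e' ∈ M₀ ∧ e'.2 = a.2 ∧
      e'.1 ≠ m ∧ (∃ e f : I × J, e ∈ M₀ ∧ f ∈ L ∧ e.1 = e'.1 ∧ f.1 = e'.1 ∧ e ≠ f) := by
  obtain ⟨e, f, he, hf, he1, hf1, hnef⟩ := hm
  have hadm : Admissible G M₀ f := adm_of_L h₀ hL hpre he hf (he1.trans hf1.symm) hnef
  obtain ⟨a, hact, ha1f⟩ := active_exists hadm
  have ha1 : a.1 = m := ha1f.trans hf1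
  have haM : a ∉ M₀ := hact.1.2.1
  have haE : a ∈ G.E := hact.1.1
  have haL : a ∈ L → a = f := fun haL => uniq1 hL.1 haL hf ha1f
  have hbest : a ≠ f → G.pI a.1 a f := by
    intro hne
    rcases hact.2 f hadm ha1f.symm with h1 | h1
    · exact absurd h1.symm hne
    · exact h1
  have hwL : ∃ h', h' ∈ L ∧ h'.2 = a.2 := by
    by_cases haf : a = f
    · exact ⟨f, hf, by rw [haf]⟩
    · by_contra hno
      push_neg at hno
      apply hL.2 a
      refine ⟨haE, fun hal => haf (haL hal), ?_, ?_⟩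
      · intro h' hh' hh1
        have hh'f : h' = f := uniq1 hL.1 hh' hf (hh1.trans ha1f)
        rw [hh'f]
        exact hbest haf
      · intro h' hh' hh2
        exact absurd hh2 (hno h' hh')
  obtain ⟨hcl, hclL, hcl2⟩ := hwL
  obtain ⟨e', he', he'2⟩ := (cov_exchange h₀ hL hpre).1 hcl hclL
  have he'a : e'.2 = a.2 := he'2.trans hcl2
  have he'L : e' ∉ L := by
    intro he'L
    have haf : a ≠ f := by
      intro haf
      have hef : e' = f := uniq2 hL.1 he'L hf (by rw [he'a, haf])
      exact hadm.2.1 (hef ▸ he')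
    apply hL.2 a
    refine ⟨haE, fun hal => haf (haL hal), ?_, ?_⟩
    · intro h' hh' hh1
      have hh'f : h' = f := uniq1 hL.1 hh' hf (hh1.trans ha1f)
      rw [hh'f]
      exact hbest haf
    · intro h' hh' hh2
      have hh'e : h' = e' := uniq2 hL.1 hh' he'L (by rw [hh2, he'a])
      rw [hh'e]
      exact hact.1.2.2.2 e' he' he'a
  have he'1 : e'.1 ≠ m := by
    intro h1
    have hee' : e' = e := uniq1 h₀.1 he' he (by rw [h1, he1])
    have hae : a = e := Prod.ext (ha1.trans he1.symm) (by rw [← he'a, hee'])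
    exact haM (hae ▸ he)
  obtain ⟨h₂, hh₂L, hh₂1⟩ := (cov_exchange h₀ hL hpre).2 e' he'
  exact ⟨a, e', hact, ha1, haM, he', he'a, he'1, e', h₂, he', hh₂L, rfl, hh₂1,
    fun h => he'L (h ▸ hh₂L)⟩

lemma exists_cycle_of_other (h₀ : IsStable G M₀)
    (hopt : ∀ L, IsStable G L → Preceq G M₀ L) {L : Finset (I × J)}
    (hL : IsStable G L) (hne : L ≠ M₀) :
    ∃ (u : I ⊕ J) (p : (gammaSG G M₀).Walk u u), p.IsCycle := by
  classical
  have hpre := hopt L hL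
  have hLd : ∃ f, f ∈ L ∧ f ∉ M₀ := by
    by_contra hno
    push_neg at hno
    have hsub : L ⊆ M₀ := fun x hx => hno x hx
    obtain ⟨e, he, heL⟩ : ∃ e, e ∈ M₀ ∧ e ∉ L := by
      by_contra hno2
      push_neg at hno2
      exact hne (Finset.Subset.antisymm hsub hno2)
    apply hL.2 e
    refine ⟨h₀.1.1 he, heL, ?_, ?_⟩
    · intro h' hh' hh1
      exact absurd (uniq1 h₀.1 (hsub hh') he hh1) (fun hq => heL (hq ▸ hh'))
    · intro h' hh' hh2
      exact absurd (uniq2 h₀.1 (hsub hh') he hh2) (fun hq => heL (hq ▸ hh'))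
  obtain ⟨f0, hf0L, hf0M⟩ := hLd
  haveI : Inhabited I := ⟨f0.1⟩
  haveI : Inhabited J := ⟨f0.2⟩
  let S : I → Prop := fun m => ∃ e f : I × J, e ∈ M₀ ∧ f ∈ L ∧ e.1 = m ∧ f.1 = m ∧ e ≠ f
  have hS0 : S f0.1 := by
    obtain ⟨e, he, he1⟩ := man_cov h₀ hL hpre hf0L hf0M
    exact ⟨e, f0, he, hf0L, he1, rfl, fun h => hf0M (h ▸ he)⟩
  have hstep := fun m (hm : S m) => step_lemma h₀ hL hpre hm
  let pk : I → (I × J) × (I × J) := fun m =>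
    if hm : S m then ((hstep m hm).choose, (hstep m hm).choose_spec.choose)
    else default
  let aF : I → I × J := fun m => (pk m).1
  let eF : I → I × J := fun m => (pk m).2
  let F : I → I := fun m => (eF m).1
  have hprop : ∀ m, S m → ActiveEdge G M₀ (aF m) ∧ (aF m).1 = m ∧ aF m ∉ M₀ ∧
      eF m ∈ M₀ ∧ (eF m).2 = (aF m).2 ∧ F m ≠ m ∧ S (F m) := by
    intro m hm
    have hspec := (hstep m hm).choose_spec.choose_spec
    simp only [pk, aF, eF, F, dif_pos hm]
    exact hspec
  have hSit : ∀ n, S (F^[n] f0.1) := by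
    intro n
    induction n with
    | zero => exact hS0
    | succ n ih =>
      rw [Function.iterate_succ_apply']
      exact (hprop _ ih).2.2.2.2.2.2
  obtain ⟨n1, n2, hn12, hneq⟩ := Finite.exists_ne_map_eq_of_infinite fun n : ℕ => F^[n] f0.1
  have hkey : ∃ z d, S z ∧ 0 < d ∧ F^[d] z = z := by
    rcases Nat.lt_or_ge n1 n2 with h | h
    · refine ⟨F^[n1] f0.1, n2 - n1, hSit n1, by omega, ?_⟩
      rw [← Function.iterate_add_apply]
      have h2 : n2 - n1 + n1 = n2 := by omega
      rw [h2, ← hneq]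
    · have h' : n2 < n1 := by omega
      refine ⟨F^[n2] f0.1, n1 - n2, hSit n2, by omega, ?_⟩
      rw [← Function.iterate_add_apply]
      have h2 : n1 - n2 + n2 = n1 := by omega
      rw [h2, hneq]
  obtain ⟨z, d, hSz, hd, hzd⟩ := hkey
  have hex : ∃ t, 0 < t ∧ F^[t] z = z := ⟨d, hd, hzd⟩
  obtain ⟨t, ⟨ht0, htz⟩, hmin⟩ : ∃ t, (0 < t ∧ F^[t] z = z) ∧
      ∀ s, s < t → ¬(0 < s ∧ F^[s] z = z) :=
    ⟨Nat.find hex, Nat.find_spec hex, fun s hs => Nat.find_min hex hs⟩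
  have hFz : F z ≠ z := (hprop z hSz).2.2.2.2.2.1
  have ht2 : 2 ≤ t := by
    by_contra hlt
    push_neg at hlt
    have ht1 : t = 1 := by omega
    rw [ht1, Function.iterate_one] at htz
    exact hFz htz
  have hSk : ∀ k, S (F^[k] z) := by
    intro k
    induction k with
    | zero => exact hSz
    | succ k ih =>
      rw [Function.iterate_succ_apply']
      exact (hprop _ ih).2.2.2.2.2.2
  have hknz : ∀ k, 0 < k → k < t → F^[k] z ≠ z := by
    intro k h1 h2 heq
    exact hmin k h2 ⟨h1, heq⟩
  set az := aF z with haz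
  have hpz := hprop z hSz
  have hadjz : (gammaSG G M₀).Adj (Sum.inl z) (Sum.inr az.2) := by
    rw [gamma_adj]
    right
    have hzz : (z, az.2) = az := Prod.ext (hpz.2.1).symm rfl
    rw [hzz]
    exact hpz.1
  have hadjM : ∀ k, (gammaSG G M₀ \ SimpleGraph.fromEdgeSet {s(Sum.inl z, Sum.inr az.2)}).Adj
      (Sum.inr (aF (F^[k] z)).2) (Sum.inl (F^[k+1] z)) := by
    intro k
    have hp := hprop _ (hSk k)
    have hFk1 : F^[k+1] z = F (F^[k] z) := Function.iterate_succ_apply' F k z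
    rw [SimpleGraph.sdiff_adj]
    constructor
    · have hadj : (gammaSG G M₀).Adj (Sum.inl (F (F^[k] z))) (Sum.inr (aF (F^[k] z)).2) := by
        rw [gamma_adj]
        left
        have hmm : (F (F^[k] z), (aF (F^[k] z)).2) = eF (F^[k] z) :=
          Prod.ext rfl (hp.2.2.2.2.1).symm
        rw [hmm]
        exact hp.2.2.2.1
      rw [hFk1]
      exact hadj.symm
    · intro hadj
      rw [SimpleGraph.fromEdgeSet_adj] at hadj
      obtain ⟨hmem, -⟩ := hadj
      rw [Set.mem_singleton_iff, Sym2.eq_swap, pair_eq] at hmem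
      have heq : eF (F^[k] z) = az := by
        refine Prod.ext ?_ (hp.2.2.2.2.1.trans hmem.2)
        show (eF (F^[k] z)).1 = az.1
        calc (eF (F^[k] z)).1 = F (F^[k] z) := rfl
          _ = F^[k+1] z := hFk1.symm
          _ = z := hmem.1
          _ = az.1 := hpz.2.1.symm
      exact hpz.2.2.1 (by rw [← haz, ← heq]; exact hp.2.2.2.1)
  have hadjA : ∀ k, 0 < k → k < t →
      (gammaSG G M₀ \ SimpleGraph.fromEdgeSet {s(Sum.inl z, Sum.inr az.2)}).Adj
        (Sum.inl (F^[k] z)) (Sum.inr (aF (F^[k] z)).2) := by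
    intro k h1 h2
    have hp := hprop _ (hSk k)
    rw [SimpleGraph.sdiff_adj]
    constructor
    · rw [gamma_adj]
      right
      have hmm : (F^[k] z, (aF (F^[k] z)).2) = aF (F^[k] z) := Prod.ext hp.2.1.symm rfl
      rw [hmm]
      exact hp.1
    · intro hadj
      rw [SimpleGraph.fromEdgeSet_adj] at hadj
      obtain ⟨hmem, -⟩ := hadj
      rw [Set.mem_singleton_iff, pair_eq] at hmem
      exact hknz k h1 h2 hmem.1
  have hreach : ∀ dd k, k + dd = t → 1 ≤ k →
      (gammaSG G M₀ \ SimpleGraph.fromEdgeSet {s(Sum.inl z, Sum.inr az.2)}).Reachable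
        (Sum.inl (F^[k] z)) (Sum.inl z) := by
    intro dd
    induction dd with
    | zero =>
      intro k hk _
      rw [show k = t by omega, htz]
    | succ dd ih =>
      intro k hk h1
      have h2 : k < t := by omega
      exact ((hadjA k h1 h2).reachable).trans
        (((hadjM k).reachable).trans (ih (k+1) (by omega) (by omega)))
  have hr1 := hreach (t-1) 1 (by omega) le_rfl
  have hr0 : (gammaSG G M₀ \ SimpleGraph.fromEdgeSet {s(Sum.inl z, Sum.inr az.2)}).Adj
      (Sum.inr az.2) (Sum.inl (F^[1] z)) := by
    have h := hadjM 0
    simpa [← haz] using h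
  have hreach2 : (gammaSG G M₀ \ SimpleGraph.fromEdgeSet {s(Sum.inl z, Sum.inr az.2)}).Reachable
      (Sum.inl z) (Sum.inr az.2) := (hr0.reachable.trans hr1).symm
  obtain ⟨u, p, hcyc, -⟩ :=
    SimpleGraph.adj_and_reachable_delete_edges_iff_exists_cycle.mp ⟨hadjz, hreach2⟩
  exact ⟨u, p, hcyc⟩

end MainAux
section Rotation

variable {I J : Type} [Fintype I] [Fintype J] [DecidableEq I] [DecidableEq J]
variable {G : PrefSystem I J} {M₀ : Finset (I × J)}

lemma stable_of_cycle (h₀ : IsStable G M₀) {u : I ⊕ J} {p : (gammaSG G M₀).Walk u u}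
    (hp : p.IsCycle) : ∃ M' : Finset (I × J), IsStable G M' ∧ M' ≠ M₀ := by
  classical
  set C : Finset (I × J) := G.E.filter (fun e => s(Sum.inl e.1, Sum.inr e.2) ∈ p.edges) with hC
  have hCGam0 : ∀ e : I × J, s(Sum.inl e.1, Sum.inr e.2) ∈ p.edges → InGamma G M₀ e := by
    intro e h
    have hadj : (gammaSG G M₀).Adj (Sum.inl e.1) (Sum.inr e.2) :=
      (SimpleGraph.mem_edgeSet _).mp (p.edges_subset_edgeSet h)
    rw [gamma_adj] at hadj
    rwa [Prod.mk.eta] at hadj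
  have hCiff : ∀ e : I × J, e ∈ C ↔ s(Sum.inl e.1, Sum.inr e.2) ∈ p.edges := by
    intro e
    rw [hC, Finset.mem_filter]
    exact ⟨fun h => h.2, fun h => ⟨inGamma_E h₀.1 (hCGam0 e h), h⟩⟩
  have hCGam : ∀ e ∈ C, InGamma G M₀ e := fun e he => hCGam0 e ((hCiff e).mp he)
  have hCE : ∀ e ∈ C, e ∈ G.E := fun e he => inGamma_E h₀.1 (hCGam e he)
  have hshape : ∀ q ∈ p.edges, ∃ e : I × J, q = s(Sum.inl e.1, Sum.inr e.2) ∧ e ∈ C := by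
    intro q hq
    induction q using Sym2.ind with
    | _ x y =>
      have hadj : (gammaSG G M₀).Adj x y := (SimpleGraph.mem_edgeSet _).mp (p.edges_subset_edgeSet hq)
      rcases x with m | w <;> rcases y with m' | w'
      · exact hadj.elim
      · exact ⟨(m, w'), rfl, (hCiff (m, w')).mpr hq⟩
      · rw [Sym2.eq_swap] at hq
        exact ⟨(m', w), Sym2.eq_swap, (hCiff (m', w)).mpr hq⟩
      · exact hadj.elim
  have hCA_act : ∀ e ∈ C, e ∉ M₀ → ActiveEdge G M₀ e :=
    fun e he hne => (hCGam e he).resolve_left hne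
  -- structure at each man of the cycle
  have hman : ∀ m : I, (∃ e ∈ C, e.1 = m) → ∃ eM aM : I × J,
      eM ∈ C ∧ aM ∈ C ∧ eM.1 = m ∧ aM.1 = m ∧ eM ∈ M₀ ∧ ActiveEdge G M₀ aM ∧ aM ∉ M₀ ∧
      ∀ e ∈ C, e.1 = m → e = eM ∨ e = aM := by
    intro m hm
    obtain ⟨c0, hc0, hc01⟩ := hm
    have hsupp : Sum.inl m ∈ p.support := by
      have h := (hCiff c0).mp hc0
      rw [hc01] at h
      exact p.fst_mem_support_of_mem_edges h
    obtain ⟨q1, q2, hq1, hq2, hq12, hv1, hv2, hcov⟩ := cycle_two_edges hp hsupp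
    obtain ⟨c1, rfl, hc1⟩ := hshape q1 hq1
    obtain ⟨c2, rfl, hc2⟩ := hshape q2 hq2
    have hc11 : c1.1 = m := by
      rw [Sym2.mem_iff] at hv1
      rcases hv1 with h | h
      · exact (Sum.inl.inj h).symm
      · simp at h
    have hc21 : c2.1 = m := by
      rw [Sym2.mem_iff] at hv2
      rcases hv2 with h | h
      · exact (Sum.inl.inj h).symm
      · simp at h
    have hcovp : ∀ e ∈ C, e.1 = m → e = c1 ∨ e = c2 := by
      intro e he he1
      have hq := (hCiff e).mp he
      have hmem : Sum.inl m ∈ s(Sum.inl e.1, Sum.inr e.2) := by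
        rw [Sym2.mem_iff]
        left
        rw [he1]
      rcases hcov _ hq hmem with h | h
      · left
        rw [pair_eq] at h
        exact Prod.ext h.1 h.2
      · right
        rw [pair_eq] at h
        exact Prod.ext h.1 h.2
    have hc12 : c1 ≠ c2 := fun h => hq12 (by rw [h])
    rcases hCGam c1 hc1 with h1 | h1 <;> rcases hCGam c2 hc2 with h2 | h2
    · exact absurd (uniq1 h₀.1 h1 h2 (hc11.trans hc21.symm)) hc12
    · exact ⟨c1, c2, hc1, hc2, hc11, hc21, h1, h2, h2.1.2.1, hcovp⟩
    · refine ⟨c2, c1, hc2, hc1, hc21, hc11, h2, h1, h1.1.2.1, ?_⟩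
      intro e he he1
      rcases hcovp e he he1 with h | h
      · exact Or.inr h
      · exact Or.inl h
    · exact absurd (active_unique h1 h2 (hc11.trans hc21.symm)) hc12
  -- two cycle edges at each woman of the cycle
  have hwoman2 : ∀ w : J, (∃ e ∈ C, e.2 = w) → ∃ c1 c2 : I × J,
      c1 ∈ C ∧ c2 ∈ C ∧ c1.2 = w ∧ c2.2 = w ∧ c1 ≠ c2 ∧
      ∀ e ∈ C, e.2 = w → e = c1 ∨ e = c2 := by
    intro w hw
    obtain ⟨c0, hc0, hc02⟩ := hw
    have hsupp : Sum.inr w ∈ p.support := by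
      have h := (hCiff c0).mp hc0
      rw [hc02] at h
      exact p.snd_mem_support_of_mem_edges h
    obtain ⟨q1, q2, hq1, hq2, hq12, hv1, hv2, hcov⟩ := cycle_two_edges hp hsupp
    obtain ⟨c1, rfl, hc1⟩ := hshape q1 hq1
    obtain ⟨c2, rfl, hc2⟩ := hshape q2 hq2
    have hc12w : c1.2 = w := by
      rw [Sym2.mem_iff] at hv1
      rcases hv1 with h | h
      · simp at h
      · exact (Sum.inr.inj h).symm
    have hc22w : c2.2 = w := by
      rw [Sym2.mem_iff] at hv2
      rcases hv2 with h | h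
      · simp at h
      · exact (Sum.inr.inj h).symm
    have hc12 : c1 ≠ c2 := fun h => hq12 (by rw [h])
    refine ⟨c1, c2, hc1, hc2, hc12w, hc22w, hc12, ?_⟩
    intro e he he2
    have hq := (hCiff e).mp he
    have hmem : Sum.inr w ∈ s(Sum.inl e.1, Sum.inr e.2) := by
      rw [Sym2.mem_iff]
      right
      rw [he2]
    rcases hcov _ hq hmem with h | h
    · left
      rw [pair_eq] at h
      exact Prod.ext h.1 h.2
    · right
      rw [pair_eq] at h
      exact Prod.ext h.1 h.2
  -- counting
  set SI := C.image Prod.fst with hSI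
  set SJ := C.image Prod.snd with hSJ
  have fiberI : ∀ m ∈ SI, (C.filter (fun e => e.1 = m)).card = 2 := by
    intro m hm
    obtain ⟨c0, hc0, hc01⟩ := Finset.mem_image.mp hm
    obtain ⟨eM, aM, heMC, haMC, heM1, haM1, heMM, haMact, haMM, hcov⟩ :=
      hman m ⟨c0, hc0, hc01⟩
    have hne : eM ≠ aM := fun h => haMM (h ▸ heMM)
    have hfe : C.filter (fun e => e.1 = m) = {eM, aM} := by
      ext e
      simp only [Finset.mem_filter, Finset.mem_insert, Finset.mem_singleton]
      constructor
      · rintro ⟨he, he1⟩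
        exact hcov e he he1
      · rintro (rfl | rfl)
        exacts [⟨heMC, heM1⟩, ⟨haMC, haM1⟩]
    rw [hfe]
    rw [Finset.card_insert_of_notMem (by simpa using hne), Finset.card_singleton]
  have fiberJ : ∀ w ∈ SJ, (C.filter (fun e => e.2 = w)).card = 2 := by
    intro w hw
    obtain ⟨c0, hc0, hc02⟩ := Finset.mem_image.mp hw
    obtain ⟨c1, c2, hc1, hc2, hc12w, hc22w, hc12, hcov⟩ := hwoman2 w ⟨c0, hc0, hc02⟩
    have hfe : C.filter (fun e => e.2 = w) = {c1, c2} := by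
      ext e
      simp only [Finset.mem_filter, Finset.mem_insert, Finset.mem_singleton]
      constructor
      · rintro ⟨he, he2⟩
        exact hcov e he he2
      · rintro (rfl | rfl)
        exacts [⟨hc1, hc12w⟩, ⟨hc2, hc22w⟩]
    rw [hfe]
    rw [Finset.card_insert_of_notMem (by simpa using hc12), Finset.card_singleton]
  have hcard1 : C.card = SI.card * 2 := by
    rw [Finset.card_eq_sum_card_fiberwise
      (f := Prod.fst) (t := SI) (fun x hx => Finset.mem_image_of_mem _ hx)]
    rw [Finset.sum_congr rfl fiberI, Finset.sum_const, smul_eq_mul]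
  have hcard2 : C.card = SJ.card * 2 := by
    rw [Finset.card_eq_sum_card_fiberwise
      (f := Prod.snd) (t := SJ) (fun x hx => Finset.mem_image_of_mem _ hx)]
    rw [Finset.sum_congr rfl fiberJ, Finset.sum_const, smul_eq_mul]
  set CM := C.filter (fun e => e ∈ M₀) with hCM
  have hCMinj1 : Set.InjOn Prod.fst (↑CM : Set (I × J)) := by
    intro x hx y hy h
    exact uniq1 h₀.1 (Finset.mem_filter.mp hx).2 (Finset.mem_filter.mp hy).2 h
  have hCMinj2 : Set.InjOn Prod.snd (↑CM : Set (I × J)) := by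
    intro x hx y hy h
    exact uniq2 h₀.1 (Finset.mem_filter.mp hx).2 (Finset.mem_filter.mp hy).2 h
  have hCMimg1 : CM.image Prod.fst = SI := by
    apply Finset.Subset.antisymm
    · intro m hm
      obtain ⟨x, hx, rfl⟩ := Finset.mem_image.mp hm
      exact Finset.mem_image_of_mem _ (Finset.mem_filter.mp hx).1
    · intro m hm
      obtain ⟨c0, hc0, hc01⟩ := Finset.mem_image.mp hm
      obtain ⟨eM, aM, heMC, haMC, heM1, haM1, heMM, haMact, haMM, hcov⟩ :=
        hman m ⟨c0, hc0, hc01⟩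
      exact Finset.mem_image.mpr ⟨eM, Finset.mem_filter.mpr ⟨heMC, heMM⟩, heM1⟩
  have hCMcard : CM.card = SI.card := by
    rw [← hCMimg1, Finset.card_image_of_injOn hCMinj1]
  have hCMimg2 : CM.image Prod.snd = SJ := by
    apply Finset.eq_of_subset_of_card_le
    · intro w hw
      obtain ⟨x, hx, rfl⟩ := Finset.mem_image.mp hw
      exact Finset.mem_image_of_mem _ (Finset.mem_filter.mp hx).1
    · rw [Finset.card_image_of_injOn hCMinj2, hCMcard]
      omega
  -- full structure at each woman of the cycle
  have hwomanS : ∀ w : J, (∃ e ∈ C, e.2 = w) → ∃ eW aW : I × J,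
      eW ∈ C ∧ aW ∈ C ∧ eW.2 = w ∧ aW.2 = w ∧ eW ∈ M₀ ∧ ActiveEdge G M₀ aW ∧ aW ∉ M₀ ∧
      (∀ e ∈ C, e.2 = w → e = eW ∨ e = aW) ∧ G.pJ w aW eW := by
    intro w hw
    obtain ⟨c1, c2, hc1, hc2, hc12w, hc22w, hc12, hcov⟩ := hwoman2 w hw
    have hwSJ : w ∈ SJ := by
      obtain ⟨e, he, he2⟩ := hw
      exact Finset.mem_image.mpr ⟨e, he, he2⟩
    have hwCM : w ∈ CM.image Prod.snd := hCMimg2.symm ▸ hwSJ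
    obtain ⟨eW, heWCM, heW2⟩ := Finset.mem_image.mp hwCM
    have heWC : eW ∈ C := (Finset.mem_filter.mp heWCM).1
    have heWM : eW ∈ M₀ := (Finset.mem_filter.mp heWCM).2
    have main : ∀ y : I × J, y ∈ C → y.2 = w → eW ≠ y →
        (∀ e ∈ C, e.2 = w → e = eW ∨ e = y) → ∃ eW' aW : I × J,
        eW' ∈ C ∧ aW ∈ C ∧ eW'.2 = w ∧ aW.2 = w ∧ eW' ∈ M₀ ∧ ActiveEdge G M₀ aW ∧ aW ∉ M₀ ∧
        (∀ e ∈ C, e.2 = w → e = eW' ∨ e = aW) ∧ G.pJ w aW eW' := by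
      intro y hy hy2 hney hcov'
      have hyM : y ∉ M₀ := by
        intro hyM
        exact hney (uniq2 h₀.1 heWM hyM (by rw [heW2, hy2]))
      have hyact : ActiveEdge G M₀ y := hCA_act y hy hyM
      have hpj : G.pJ w y eW := by
        have := hyact.1.2.2.2 eW heWM (by rw [heW2, hy2])
        rwa [hy2] at this
      exact ⟨eW, y, heWC, hy, heW2, hy2, heWM, hyact, hyM, hcov', hpj⟩
    rcases hcov eW heWC heW2 with h | h
    · -- eW = c1, other is c2
      refine main c2 hc2 hc22w ?_ ?_
      · rw [h]
        exact hc12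
      · intro e he he2
        rcases hcov e he he2 with h' | h'
        · exact Or.inl (h'.trans h.symm)
        · exact Or.inr h'
    · refine main c1 hc1 hc12w ?_ ?_
      · rw [h]
        exact fun hh => hc12 hh.symm
      · intro e he he2
        rcases hcov e he he2 with h' | h'
        · exact Or.inr h'
        · exact Or.inl (h'.trans h.symm)
  -- the rotated matching
  set M' := (M₀ \ C) ∪ (C.filter (fun e => e ∉ M₀)) with hM'
  have hM'mem : ∀ e : I × J, e ∈ M' ↔ (e ∈ M₀ ∧ e ∉ C) ∨ (e ∈ C ∧ e ∉ M₀) := by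
    intro e
    simp [hM', Finset.mem_union, Finset.mem_sdiff, Finset.mem_filter]
  have hM'match : IsMatching G M' := by
    constructor
    · intro e he
      rcases (hM'mem e).mp he with ⟨h1, _⟩ | ⟨h1, _⟩
      · exact h₀.1.1 h1
      · exact hCE e h1
    · intro e he f hf hnef
      constructor
      · intro h1
        apply hnef
        rcases (hM'mem e).mp he with ⟨he1, he2⟩ | ⟨he1, he2⟩ <;>
          rcases (hM'mem f).mp hf with ⟨hf1, hf2⟩ | ⟨hf1, hf2⟩
        · exact uniq1 h₀.1 he1 hf1 h1
        · exfalso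
          obtain ⟨eM, aM, heMC, haMC, heM1, haM1, heMM, haMact, haMM, hcov⟩ :=
            hman f.1 ⟨f, hf1, rfl⟩
          have heeM : e = eM := uniq1 h₀.1 he1 heMM (by rw [h1, ← heM1])
          exact he2 (heeM ▸ heMC)
        · exfalso
          obtain ⟨eM, aM, heMC, haMC, heM1, haM1, heMM, haMact, haMM, hcov⟩ :=
            hman e.1 ⟨e, he1, rfl⟩
          have hfeM : f = eM := uniq1 h₀.1 hf1 heMM (by rw [← h1, ← heM1])
          exact hf2 (hfeM ▸ heMC)
        · exact active_unique (hCA_act e he1 he2) (hCA_act f hf1 hf2) h1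
      · intro h2
        apply hnef
        rcases (hM'mem e).mp he with ⟨he1, he2⟩ | ⟨he1, he2⟩ <;>
          rcases (hM'mem f).mp hf with ⟨hf1, hf2⟩ | ⟨hf1, hf2⟩
        · exact uniq2 h₀.1 he1 hf1 h2
        · exfalso
          obtain ⟨eW, aW, heWC, haWC, heW2, haW2, heWM, haWact, haWM, hcov, hpj⟩ :=
            hwomanS f.2 ⟨f, hf1, rfl⟩
          have heeW : e = eW := uniq2 h₀.1 he1 heWM (by rw [h2, ← heW2])
          exact he2 (heeW ▸ heWC)
        · exfalso
          obtain ⟨eW, aW, heWC, haWC, heW2, haW2, heWM, haWact, haWM, hcov, hpj⟩ :=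
            hwomanS e.2 ⟨e, he1, rfl⟩
          have hfeW : f = eW := uniq2 h₀.1 hf1 heWM (by rw [← h2, ← heW2])
          exact hf2 (hfeW ▸ heWC)
        · obtain ⟨eW, aW, heWC, haWC, heW2, haW2, heWM, haWact, haWM, hcov, hpj⟩ :=
            hwomanS f.2 ⟨f, hf1, rfl⟩
          have he' : e = aW := by
            rcases hcov e he1 h2 with h | h
            · exact absurd (h ▸ heWM) he2
            · exact h
          have hf' : f = aW := by
            rcases hcov f hf1 rfl with h | h
            · exact absurd (h ▸ heWM) hf2
            · exact h
          rw [he', hf']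
  have hM'stable : ∀ e, ¬ Blocks G M' e := by
    intro e hbl
    obtain ⟨heE, heM', hbI, hbJ⟩ := hbl
    have hwJ : ∀ g ∈ M₀, g.2 = e.2 → G.pJ e.2 e g := by
      intro g hg hg2
      by_cases hw : ∃ x ∈ C, x.2 = e.2
      · obtain ⟨eW, aW, heWC, haWC, heW2, haW2, heWM, haWact, haWM, hcov, hpj⟩ :=
          hwomanS e.2 hw
        have hgeW : g = eW := uniq2 h₀.1 hg heWM (by rw [hg2, heW2])
        have haWM' : aW ∈ M' := (hM'mem aW).mpr (Or.inr ⟨haWC, haWM⟩)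
        have h1 := hbJ aW haWM' haW2
        rw [hgeW]
        exact G.pJ_trans e.2 e aW eW h1 hpj
      · have hgC : g ∉ C := fun hgC => hw ⟨g, hgC, hg2⟩
        exact hbJ g ((hM'mem g).mpr (Or.inl ⟨hg, hgC⟩)) hg2
    by_cases hmI : ∃ x ∈ C, x.1 = e.1
    · obtain ⟨eM, aM, heMC, haMC, heM1, haM1, heMM, haMact, haMM, hcov⟩ := hman e.1 hmI
      have haMM' : aM ∈ M' := (hM'mem aM).mpr (Or.inr ⟨haMC, haMM⟩)
      have hpeaM : G.pI e.1 e aM := hbI aM haMM' haM1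
      have heaM : e ≠ aM := fun h => heM' (h ▸ haMM')
      have heM₀ : e ∉ M₀ := by
        intro heM₀
        have heeM : e = eM := uniq1 h₀.1 heM₀ heMM heM1.symm
        have hw : ∃ x ∈ C, x.2 = e.2 := ⟨eM, heMC, by rw [← heeM]⟩
        obtain ⟨eW, aW, heWC, haWC, heW2, haW2, heWM, haWact, haWM, hcovW, hpj⟩ :=
          hwomanS e.2 hw
        have heeW : e = eW := uniq2 h₀.1 heM₀ heWM heW2.symm
        have haWM' : aW ∈ M' := (hM'mem aW).mpr (Or.inr ⟨haWC, haWM⟩)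
        have h1 := hbJ aW haWM' haW2
        have h2 : G.pJ e.2 aW e := by
          rw [← heeW] at hpj
          exact hpj
        exact G.pJ_irrefl e.2 e (G.pJ_trans e.2 e aW e h1 h2)
      have heeM : e ≠ eM := fun h => heM₀ (h ▸ heMM)
      rcases G.pI_total e.1 e eM heE (h₀.1.1 heMM) rfl heM1 heeM with hcmp | hcmp
      · apply h₀.2 e
        refine ⟨heE, heM₀, ?_, hwJ⟩
        intro g hg hg1
        have hgeM : g = eM := uniq1 h₀.1 hg heMM (by rw [hg1, ← heM1])
        rw [hgeM]
        exact hcmp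
      · have hadm : Admissible G M₀ e := ⟨heE, heM₀, ⟨eM, heMM, heM1, hcmp⟩, hwJ⟩
        rcases haMact.2 e hadm haM1.symm with h | h
        · exact heaM h
        · have h' : G.pI e.1 aM e := by
            rw [← haM1]
            exact h
          exact G.pI_irrefl e.1 e (G.pI_trans e.1 e aM e hpeaM h')
    · apply h₀.2 e
      have heM₀ : e ∉ M₀ := by
        intro heM₀
        have heC : e ∉ C := fun h => hmI ⟨e, h, rfl⟩
        exact heM' ((hM'mem e).mpr (Or.inl ⟨heM₀, heC⟩))
      refine ⟨heE, heM₀, ?_, hwJ⟩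
      intro g hg hg1
      have hgC : g ∉ C := fun h => hmI ⟨g, h, hg1⟩
      exact hbI g ((hM'mem g).mpr (Or.inl ⟨hg, hgC⟩)) hg1
  -- M' differs from M₀
  have hCne : ∃ c, c ∈ C := by
    have hlen := hp.three_le_length
    have hnil : p.edges ≠ [] := by
      intro h
      have hlen2 := p.length_edges
      rw [h] at hlen2
      simp at hlen2
      omega
    obtain ⟨q, hq⟩ := List.exists_mem_of_ne_nil _ hnil
    obtain ⟨c, -, hc⟩ := hshape q hq
    exact ⟨c, hc⟩
  obtain ⟨c0, hc0⟩ := hCne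
  obtain ⟨eM, aM, heMC, haMC, heM1, haM1, heMM, haMact, haMM, -⟩ := hman c0.1 ⟨c0, hc0, rfl⟩
  refine ⟨M', ⟨hM'match, hM'stable⟩, ?_⟩
  intro hMM
  have : aM ∈ M' := (hM'mem aM).mpr (Or.inr ⟨haMC, haMM⟩)
  rw [hMM] at this
  exact haMM this

end Rotation

/-- `G` has a unique stable matching iff the active graph
`Γ(M₀)` of the `I`-optimal stable matching `M₀` is a forest. -/
theorem unique_stable_iff_forest {I J : Type} [Fintype I] [Fintype J]
    [DecidableEq I] [DecidableEq J] (G : PrefSystem I J)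
    (M₀ : Finset (I × J)) (h₀ : IsStable G M₀)
    (hopt : ∀ L, IsStable G L → Preceq G M₀ L) :
    (∀ M : Finset (I × J), IsStable G M → M = M₀) ↔
      (∀ (u : I ⊕ J) (p : (gammaSG G M₀).Walk u u), ¬ p.IsCycle) := by
  constructor
  · intro huniq u p hp
    obtain ⟨M', hM', hne⟩ := stable_of_cycle h₀ hp
    exact hne (huniq M' hM')
  · intro hforest M hM
    by_contra hne
    obtain ⟨u, p, hcyc⟩ := exists_cycle_of_other h₀ hopt hM hne
    exact hforest u p hcyc
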